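/- If there exists an orthogonal array OA_λ(k,n) with k ≥ 2, n ≥ 2 and λ ≥ 1, then λn² ≥ k(n−1) + 1 (equivalently, λ ≥ (k(n−1)+1)/n²). -/
import Mathlib


/-- Plackett-Burman bound: if an OA_λ(k,n) exists with k ≥ 2, n ≥ 2, λ ≥ 1,
then λn² ≥ k(n−1) + 1. -/
theorem plackett_burman_bound (k n lam : ℕ) (hk : 2 ≤ k) (hn : 2 ≤ n) (hlam : 1 ≤ lam)
    (A : Fin (lam * n ^ 2) → Fin k → Fin n)
    (hOA : ∀ j j' : Fin k, j ≠ j' → ∀ x y : Fin n,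
      (Finset.univ.filter (fun r => A r j = x ∧ A r j' = y)).card = lam) :
    k * (n - 1) + 1 ≤ lam * n ^ 2 := by
  classical
  have hN : 0 < lam * n ^ 2 := by positivity
  set r0 : Fin (lam * n ^ 2) := ⟨0, hN⟩ with hr0
  set d : Fin (lam * n ^ 2) → ℕ :=
    fun r => (Finset.univ.filter fun j => A r j = A r0 j).card with hd
  -- single column count
  have hcol : ∀ j : Fin k,
      (Finset.univ.filter fun r => A r j = A r0 j).card = lam * n := by
    intro j
    obtain ⟨j', hj'⟩ : ∃ j' : Fin k, j ≠ j' := by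
      by_cases h : (j : ℕ) = 0
      · exact ⟨⟨1, by omega⟩, by simp [Fin.ext_iff, h]⟩
      · exact ⟨⟨0, by omega⟩, by simp [Fin.ext_iff, h]⟩
    rw [Finset.card_eq_sum_card_fiberwise
      (f := fun r => A r j') (t := Finset.univ) (fun x _ => Finset.mem_univ _)]
    have h1 : ∀ y : Fin n,
        ((Finset.univ.filter fun r => A r j = A r0 j).filter fun r => A r j' = y).card
          = lam := by
      intro y
      rw [Finset.filter_filter]
      exact hOA j j' hj' (A r0 j) y
    rw [Finset.sum_congr rfl fun y _ => h1 y]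
    simp [Finset.card_univ, mul_comm]
  -- key double count
  have key : ∀ j j' : Fin k,
      (∑ r, if A r j = A r0 j ∧ A r j' = A r0 j' then 1 else 0)
        = if j = j' then lam * n else lam := by
    intro j j'
    rw [← Finset.card_filter]
    by_cases h : j = j'
    · subst h
      simp only [and_self, if_true]
      exact hcol j
    · rw [hOA j j' h (A r0 j) (A r0 j')]
      simp [h]
  -- sum of d
  have hsum1 : ∑ r, d r = k * (lam * n) := by
    have h1 : ∑ r, d r
        = ∑ j : Fin k, (Finset.univ.filter fun r => A r j = A r0 j).card := by
      simp_rw [hd, Finset.card_filter]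
      exact Finset.sum_comm
    rw [h1, Finset.sum_congr rfl fun j _ => hcol j]
    simp [Finset.card_univ]
  -- sum of d squared
  have hsum2 : ∑ r, d r ^ 2 + k * lam = k * (lam * n) + k * k * lam := by
    have h1 : ∀ r, d r ^ 2 = ∑ j : Fin k, ∑ j' : Fin k,
        if A r j = A r0 j ∧ A r j' = A r0 j' then 1 else 0 := by
      intro r
      simp only [hd]
      rw [sq, Finset.card_filter, Finset.sum_mul_sum]
      refine Finset.sum_congr rfl fun j _ => Finset.sum_congr rfl fun j' _ => ?_
      by_cases h1 : A r j = A r0 j <;> by_cases h2 : A r j' = A r0 j' <;>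
        simp [h1, h2]
    have h2 : ∑ r, d r ^ 2 = ∑ j : Fin k, ∑ j' : Fin k,
        ∑ r, (if A r j = A r0 j ∧ A r j' = A r0 j' then 1 else 0) := by
      rw [Finset.sum_congr rfl fun r _ => h1 r, Finset.sum_comm]
      exact Finset.sum_congr rfl fun j _ => Finset.sum_comm
    rw [h2]
    rw [Finset.sum_congr rfl fun j _ => Finset.sum_congr rfl fun j' _ => key j j']
    -- ∑ j ∑ j' (if j = j' then lam*n else lam) = k*(lam*n) + (k*k - k)*lam
    have h3 : ∀ j : Fin k,
        ∑ j' : Fin k, (if j = j' then lam * n else lam) + lam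
          = lam * n + k * lam := by
      intro j
      rw [Finset.sum_ite, Finset.sum_const, Finset.sum_const]
      have hfc : Finset.univ.filter (fun j' => j = j') = {j} := by
        ext j'; simp [eq_comm]
      rw [hfc]
      have hfc2 : (Finset.univ.filter fun j' => ¬ j = j').card = k - 1 := by
        rw [Finset.filter_not, Finset.card_sdiff_of_subset (Finset.filter_subset _ _), hfc]
        simp [Finset.card_univ]
      rw [hfc2]
      simp only [Finset.card_singleton, one_smul, smul_eq_mul]
      obtain ⟨m, rfl⟩ : ∃ m, k = m + 1 := ⟨k - 1, by omega⟩
      simp only [Nat.add_sub_cancel]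
      ring
    calc ∑ j : Fin k, ∑ j' : Fin k, (if j = j' then lam * n else lam) + k * lam
        = ∑ j : Fin k, (∑ j' : Fin k, (if j = j' then lam * n else lam) + lam) := by
          rw [Finset.sum_add_distrib, Finset.sum_const]
          simp [Finset.card_univ, mul_comm, Nat.mul_comm]
      _ = ∑ _j : Fin k, (lam * n + k * lam) := Finset.sum_congr rfl fun j _ => h3 j
      _ = k * (lam * n) + k * k * lam := by
          rw [Finset.sum_const, Finset.card_univ]
          simp [Fintype.card_fin, Nat.mul_add]
          ring
  -- d r0 = k
  have hdr0 : d r0 = k := by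
    simp [hd, Finset.card_univ]
  -- restrict to S = erase r0
  set S : Finset (Fin (lam * n ^ 2)) := Finset.univ.erase r0 with hS
  have hcardS : S.card + 1 = lam * n ^ 2 := by
    rw [hS, Finset.card_erase_of_mem (Finset.mem_univ _), Finset.card_univ,
      Fintype.card_fin]
    omega
  have hE1 : k + ∑ r ∈ S, d r = k * (lam * n) := by
    rw [← hsum1, ← Finset.add_sum_erase _ _ (Finset.mem_univ r0), hdr0]
  have hE2 : k * k + (∑ r ∈ S, d r ^ 2) + k * lam = k * (lam * n) + k * k * lam := by
    rw [← hsum2, ← Finset.add_sum_erase _ (fun r => d r ^ 2) (Finset.mem_univ r0), hdr0]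
    ring
  -- Cauchy-Schwarz over ℤ
  have hCS : ((∑ r ∈ S, (d r : ℤ)) ^ 2) ≤ (S.card : ℤ) * ∑ r ∈ S, (d r : ℤ) ^ 2 :=
    sq_sum_le_card_mul_sum_sq
  -- cast everything to ℤ and finish
  have hE1' : (k : ℤ) + ∑ r ∈ S, (d r : ℤ) = k * (lam * n) := by
    exact_mod_cast congrArg (Nat.cast : ℕ → ℤ) hE1
  have hE2' : (k : ℤ) * k + (∑ r ∈ S, (d r : ℤ) ^ 2) + k * lam
      = k * (lam * n) + k * k * lam := by
    exact_mod_cast congrArg (Nat.cast : ℕ → ℤ) hE2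
  have hcardS' : (S.card : ℤ) + 1 = lam * n ^ 2 := by
    exact_mod_cast congrArg (Nat.cast : ℕ → ℤ) hcardS
  have hgoal : (k : ℤ) * (n - 1) + 1 ≤ lam * n ^ 2 := by
    set a : ℤ := ∑ r ∈ S, (d r : ℤ)
    set b : ℤ := ∑ r ∈ S, (d r : ℤ) ^ 2
    have hk' : (2 : ℤ) ≤ k := by exact_mod_cast hk
    have hn' : (2 : ℤ) ≤ n := by exact_mod_cast hn
    have hl' : (1 : ℤ) ≤ lam := by exact_mod_cast hlam
    have ha : a = (k : ℤ) * lam * n - k := by linarith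
    have hb : b = (k : ℤ) * lam * n + k * k * lam - k * lam - k * k := by linarith
    have hc : (S.card : ℤ) = (lam : ℤ) * n ^ 2 - 1 := by linarith
    rw [ha, hb, hc] at hCS
    nlinarith [hCS,
      mul_pos (mul_pos (show (0:ℤ) < k by linarith) (show (0:ℤ) < lam by linarith))
        (show (0:ℤ) < n - 1 by linarith)]
  have h1n : 1 ≤ n := by omega
  zify [h1n]
  exact hgoal
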